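/- Let r ≥ 3 and consider the exterior-square bilinear map b : ℤ^r × ℤ^r → Λ²(ℤ^r), b(u,v) = u ∧ v. For ℤ-linear endomorphisms X, Y of ℤ^r, one has (X u) ∧ v = u ∧ (Y v) for all u, v ∈ ℤ^r if and only if there exists c ∈ ℤ with X = c·id and Y = c·id. Consequently the adjoint ring of b is isomorphic to ℤ. -/

import Mathlib

/-- The adjoint ring of a biadditive map `b : V × V → W`, as a subring of
`End(V) × End(V)ᵒᵖ`. -/
def AdjointRing {V W : Type*} [AddCommGroup V] [AddCommGroup W]
    (b : V →+ V →+ W) : Subring (AddMonoid.End V × (AddMonoid.End V)ᵐᵒᵖ) where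
  carrier := {P | ∀ u v : V, b (P.1 u) v = b u (P.2.unop v)}
  zero_mem' := by intro u v; simp
  one_mem' := by intro u v; simp
  add_mem' := by
    intro P Q hP hQ u v
    have h1 : (P + Q).1 u = P.1 u + Q.1 u := rfl
    have h2 : (P + Q).2.unop v = P.2.unop v + Q.2.unop v := rfl
    rw [h1, h2, map_add, AddMonoidHom.add_apply, map_add, hP u v, hQ u v]
  neg_mem' := by
    intro P hP u v
    have h1 : (-P).1 u = -(P.1 u) := rfl
    have h2 : (-P).2.unop v = -(P.2.unop v) := rfl
    rw [h1, h2, map_neg, AddMonoidHom.neg_apply, map_neg, hP u v]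
  mul_mem' := by
    intro P Q hP hQ u v
    have h1 : (P * Q).1 u = P.1 (Q.1 u) := rfl
    have h2 : (P * Q).2.unop v = Q.2.unop (P.2.unop v) := rfl
    rw [h1, h2, hP (Q.1 u) v, hQ u (P.2.unop v)]


/-- Coefficient-extracting alternating form: `v ↦ v 0 i * v 1 j - v 0 j * v 1 i`. -/
def phiAlt {r : ℕ} (i j : Fin r) : (Fin r → ℤ) [⋀^Fin 2]→ₗ[ℤ] ℤ where
  toFun v := v 0 i * v 1 j - v 0 j * v 1 i
  map_update_add' := by
    intro _ v k a b
    fin_cases k <;>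
      simp [Function.update_self, Function.update_of_ne, Fin.ext_iff] <;> ring
  map_update_smul' := by
    intro _ v k s a
    fin_cases k <;>
      simp [Function.update_self, Function.update_of_ne, Fin.ext_iff] <;> ring
  map_eq_zero_of_eq' := by
    intro v k l hv hkl
    have h01 : v 0 = v 1 := by fin_cases k <;> fin_cases l <;> simp_all
    simp only [h01]; ring

lemma wedge_coeff {r : ℕ} (i j : Fin r) {a b c d : Fin r → ℤ}
    (h : ExteriorAlgebra.ι ℤ a * ExteriorAlgebra.ι ℤ b =
      ExteriorAlgebra.ι ℤ c * ExteriorAlgebra.ι ℤ d) :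
    a i * b j - a j * b i = c i * d j - c j * d i := by
  have hm : ∀ x y : Fin r → ℤ, ExteriorAlgebra.ι ℤ x * ExteriorAlgebra.ι ℤ y =
      ExteriorAlgebra.ιMulti ℤ 2 ![x, y] := by
    intro x y
    rw [ExteriorAlgebra.ιMulti_apply]
    simp [List.ofFn_succ]
  have h2 := congrArg (ExteriorAlgebra.liftAlternating (Pi.single 2 (phiAlt i j))) h
  rw [hm, hm, ExteriorAlgebra.liftAlternating_apply_ιMulti,
    ExteriorAlgebra.liftAlternating_apply_ιMulti, Pi.single_eq_same] at h2
  simpa [phiAlt] using h2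

/-- The wedge biadditive map `(u, v) ↦ u ∧ v` on `ℤ^r`, with values in the exterior
algebra (where `u ∧ v = ι u * ι v`). -/
def wedgeB (r : ℕ) :
    (Fin r → ℤ) →+ (Fin r → ℤ) →+ ExteriorAlgebra ℤ (Fin r → ℤ) :=
  AddMonoidHom.mk'
    (fun u => AddMonoidHom.mk'
      (fun v => ExteriorAlgebra.ι ℤ u * ExteriorAlgebra.ι ℤ v)
      (fun v v' => by simp [map_add, mul_add]))
    (fun u u' => by ext v; simp [map_add, add_mul])


lemma exists_third {r : ℕ} (hr : 3 ≤ r) (i j : Fin r) :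
    ∃ k : Fin r, k ≠ i ∧ k ≠ j := by
  by_contra hcon
  push_neg at hcon
  have g : ∀ n : ℕ, n < r → n = i.val ∨ n = j.val := by
    intro n hn
    rcases eq_or_ne (⟨n, hn⟩ : Fin r) i with h | h
    · exact Or.inl (by rw [← h])
    · exact Or.inr (by rw [← hcon _ h])
  have g0 := g 0 (by omega)
  have g1 := g 1 (by omega)
  have g2 := g 2 (by omega)
  omega

lemma scalar_of_coeff {r : ℕ} (hr : 3 ≤ r) (X Y : AddMonoid.End (Fin r → ℤ))
    (hC : ∀ (i j : Fin r) (u v : Fin r → ℤ),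
      X u i * v j - X u j * v i = u i * Y v j - u j * Y v i) :
    ∀ u, X u = (Y (Pi.single (⟨0, by omega⟩ : Fin r) 1) (⟨0, by omega⟩ : Fin r)) • u := by
  set e : Fin r → (Fin r → ℤ) := fun j => Pi.single j 1 with he
  -- step 1
  have step1 : ∀ (i j : Fin r), i ≠ j → ∀ u : Fin r → ℤ,
      X u i = u i * Y (e j) j - u j * Y (e j) i := by
    intro i j hij u
    have h := hC i j u (e j)
    simp only [he, Pi.single_eq_same, Pi.single_apply, if_neg hij, mul_one, mul_zero,
      sub_zero] at h
    exact h
  -- step 2: off-diagonal entries of Y vanish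
  have step2 : ∀ (i j : Fin r), i ≠ j → Y (e j) i = 0 := by
    intro i j hij
    obtain ⟨k, hki, hkj⟩ := exists_third hr i j
    have h1 := step1 i j hij (e j)
    have h2 := step1 i k (Ne.symm hki) (e j)
    simp only [he, Pi.single_apply, if_neg hij, if_neg hkj, if_true] at h1 h2
    -- h1 : X (e j) i = 0 * _ - 1 * Y (e j) i ; h2 : X (e j) i = 0 * _ - 0 * _
    linarith
  -- step 3: diagonal entries of Y agree
  have step3 : ∀ j l : Fin r, Y (e j) j = Y (e l) l := by
    have key : ∀ (i j : Fin r), i ≠ j → X (e i) i = Y (e j) j := by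
      intro i j hij
      have h := step1 i j hij (e i)
      simp only [he, Pi.single_eq_same, Pi.single_apply, if_neg (Ne.symm hij), one_mul,
        zero_mul, sub_zero] at h
      exact h
    intro j l
    rcases eq_or_ne j l with rfl | hjl
    · rfl
    obtain ⟨i, hij, hil⟩ := exists_third hr j l
    rw [← key i j hij, ← key i l hil]
  -- conclude
  intro u
  funext i
  have hi0 : ∃ j : Fin r, j ≠ i := by
    obtain ⟨k, hk, _⟩ := exists_third hr i i
    exact ⟨k, hk⟩
  obtain ⟨j, hji⟩ := hi0
  have h := step1 i j (Ne.symm hji) u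
  rw [step2 i j (Ne.symm hji)] at h
  rw [Pi.smul_apply, smul_eq_mul, h, step3 j ⟨0, by omega⟩]
  ring

/-- For `r ≥ 3`, a pair of additive endomorphisms is adjoint with respect to the exterior
square `ℤ^r × ℤ^r → Λ²(ℤ^r)` iff both are a common integer scalar multiple of the
identity; consequently the adjoint ring of the exterior square is isomorphic to `ℤ`. -/
theorem statement12 (r : ℕ) (hr : 3 ≤ r) :
    (∀ X Y : AddMonoid.End (Fin r → ℤ),
      (∀ u v : Fin r → ℤ,
          ExteriorAlgebra.ι ℤ (X u) * ExteriorAlgebra.ι ℤ v =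
            ExteriorAlgebra.ι ℤ u * ExteriorAlgebra.ι ℤ (Y v)) ↔
        ∃ c : ℤ, (∀ u, X u = c • u) ∧ (∀ v, Y v = c • v)) ∧
    Nonempty (↥(AdjointRing (wedgeB r)) ≃+* ℤ) := by
  have h1 : ∀ X Y : AddMonoid.End (Fin r → ℤ),
      (∀ u v : Fin r → ℤ,
          ExteriorAlgebra.ι ℤ (X u) * ExteriorAlgebra.ι ℤ v =
            ExteriorAlgebra.ι ℤ u * ExteriorAlgebra.ι ℤ (Y v)) ↔
        ∃ c : ℤ, (∀ u, X u = c • u) ∧ (∀ v, Y v = c • v) := by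
    intro X Y
    constructor
    · intro H
      have hC : ∀ (i j : Fin r) (u v : Fin r → ℤ),
          X u i * v j - X u j * v i = u i * Y v j - u j * Y v i :=
        fun i j u v => wedge_coeff i j (H u v)
      have hC' : ∀ (i j : Fin r) (v u : Fin r → ℤ),
          Y v i * u j - Y v j * u i = v i * X u j - v j * X u i := by
        intro i j v u
        linear_combination -hC j i u v
      have hX := scalar_of_coeff hr X Y hC
      have hY := scalar_of_coeff hr Y X hC'
      refine ⟨Y (Pi.single (⟨0, by omega⟩ : Fin r) 1) (⟨0, by omega⟩ : Fin r), hX, ?_⟩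
      intro v
      rw [hY v, hX (Pi.single ⟨0, by omega⟩ 1)]
      simp
    · rintro ⟨c, hX, hY⟩ u v
      rw [hX u, hY v, map_smul, map_smul, smul_mul_assoc, mul_smul_comm]
  refine ⟨h1, ?_⟩
  set j0 : Fin r := ⟨0, by omega⟩ with hj0
  have hmem : ∀ P : AddMonoid.End (Fin r → ℤ) × (AddMonoid.End (Fin r → ℤ))ᵐᵒᵖ,
      P ∈ AdjointRing (wedgeB r) ↔
        ∃ c : ℤ, (∀ u, P.1 u = c • u) ∧ (∀ v, P.2.unop v = c • v) := by
    intro P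
    rw [← h1 P.1 P.2.unop]
    exact Iff.rfl
  let f : ↥(AdjointRing (wedgeB r)) →+* ℤ :=
    { toFun := fun P => P.1.1 (Pi.single j0 1) j0
      map_one' := by
        show ((Pi.single j0 1 : Fin r → ℤ)) j0 = 1
        exact Pi.single_eq_same _ _
      map_mul' := by
        intro P Q
        obtain ⟨cP, hcP, _⟩ := (hmem _).mp P.2
        obtain ⟨cQ, hcQ, _⟩ := (hmem _).mp Q.2
        have hPQ : (P * Q).1.1 (Pi.single j0 1) = P.1.1 (Q.1.1 (Pi.single j0 1)) := rfl
        show (P * Q).1.1 (Pi.single j0 1) j0 =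
          P.1.1 (Pi.single j0 1) j0 * Q.1.1 (Pi.single j0 1) j0
        rw [hPQ, hcQ, map_zsmul, hcP]
        simp [mul_comm]
      map_zero' := rfl
      map_add' := fun P Q => rfl }
  have hfval : ∀ (P : ↥(AdjointRing (wedgeB r))) (c : ℤ), (∀ u, P.1.1 u = c • u) →
      f P = c := by
    intro P c hc
    show P.1.1 (Pi.single j0 1) j0 = c
    rw [hc]
    simp
  have hinj : Function.Injective f := by
    intro P Q hPQ
    obtain ⟨cP, hcP1, hcP2⟩ := (hmem _).mp P.2
    obtain ⟨cQ, hcQ1, hcQ2⟩ := (hmem _).mp Q.2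
    have hc : cP = cQ := by rw [← hfval P cP hcP1, ← hfval Q cQ hcQ1, hPQ]
    apply Subtype.ext
    apply Prod.ext
    · apply AddMonoidHom.ext
      intro u
      rw [hc] at hcP1; exact (hcP1 u).trans (hcQ1 u).symm
    · apply MulOpposite.unop_injective
      apply AddMonoidHom.ext
      intro v
      rw [hc] at hcP2; exact (hcP2 v).trans (hcQ2 v).symm
  have hsurj : Function.Surjective f := by
    intro c
    have hmem' : ((c • 1, MulOpposite.op (c • 1)) :
        AddMonoid.End (Fin r → ℤ) × (AddMonoid.End (Fin r → ℤ))ᵐᵒᵖ) ∈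
          AdjointRing (wedgeB r) := by
      rw [hmem]
      exact ⟨c, fun u => rfl, fun v => rfl⟩
    refine ⟨⟨_, hmem'⟩, ?_⟩
    apply hfval _ c
    intro u
    rfl
  exact ⟨RingEquiv.ofBijective f ⟨hinj, hsurj⟩⟩
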